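/- Let γ: ℝ → ℝ be continuous with compact support, and suppose there exist s₁ < s₂ < s₃ < s₄ such that γ = 0 outside (s₁,s₂) ∪ (s₃,s₄), γ < 0 on (s₁,s₂), γ > 0 on (s₃,s₄). Let φ ∈ H¹(ℝ) with φ = 1 on [s₁,s₂] and φ = 0 on [s₃,s₄], and Φ(s,u) = √(2/d) φ(s) sin(πu/(2d)). Then q[Φ] = ‖φ'‖²_{L²(ℝ)} + (1/d)∫_{s₁}^{s₂} γ(s) ds, which is negative for all sufficiently small d > 0. -/

import Mathlib

open Real Set MeasureTheory intervalIntegral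


lemma cos_sq_integral (d b e : ℝ) (hd : 0 < d) :
    ∫ u in (0:ℝ)..d, (b * Real.cos (π*u/(2*d)))^2 * (1 - u*e)
      = b^2 * (d/2 - e*(d^2/4 - d^2/π^2)) := by
  have hπ : (π:ℝ) ≠ 0 := Real.pi_ne_zero
  have hd' : d ≠ 0 := hd.ne'
  have key : ∀ u : ℝ, HasDerivAt (fun u : ℝ =>
      b^2 * ((u/2 + (d/(2*π)) * Real.sin (π*u/d))
        - e*(u^2/4 + (d/(2*π)) * (u * Real.sin (π*u/d)) + (d^2/(2*π^2)) * Real.cos (π*u/d))))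
      ((b * Real.cos (π*u/(2*d)))^2 * (1 - u*e)) u := by
    intro u
    have hlin : HasDerivAt (fun u : ℝ => π*u/d) (π/d) u := by
      simpa using ((hasDerivAt_id u).const_mul π).div_const d
    have hs : HasDerivAt (fun u : ℝ => Real.sin (π*u/d)) (Real.cos (π*u/d) * (π/d)) u :=
      (Real.hasDerivAt_sin _).comp u hlin
    have hc : HasDerivAt (fun u : ℝ => Real.cos (π*u/d)) (-Real.sin (π*u/d) * (π/d)) u :=
      (Real.hasDerivAt_cos _).comp u hlin
    have hus : HasDerivAt (fun u : ℝ => u * Real.sin (π*u/d))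
        (Real.sin (π*u/d) + u * (Real.cos (π*u/d) * (π/d))) u := by
      exact ((hasDerivAt_id' u).mul hs).congr_deriv (by ring)
    have h1 : HasDerivAt (fun u : ℝ => u/2) (1/2) u := by
      simpa using (hasDerivAt_id u).div_const 2
    have h2 : HasDerivAt (fun u : ℝ => u^2/4) (2*u/4) u := by
      simpa using (hasDerivAt_pow 2 u).div_const 4
    have H := ((h1.add (hs.const_mul (d/(2*π)))).sub
      (((h2.add (hus.const_mul (d/(2*π)))).add (hc.const_mul (d^2/(2*π^2)))).const_mul e)).const_mul (b^2)
    refine H.congr_deriv ?_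
    have hcd : Real.cos (π*u/d) = 2 * Real.cos (π*u/(2*d))^2 - 1 := by
      rw [show π*u/d = 2*(π*u/(2*d)) by field_simp, Real.cos_two_mul]
    rw [hcd]
    field_simp
    ring
  rw [intervalIntegral.integral_eq_sub_of_hasDerivAt (fun u _ => key u)
    (Continuous.intervalIntegrable (by fun_prop) _ _)]
  have e1 : π*d/d = π := by field_simp
  have e0 : π*(0:ℝ)/d = 0 := by simp
  simp only [e1, e0, Real.sin_pi, Real.cos_pi, Real.sin_zero, Real.cos_zero]
  field_simp
  ring


lemma sin_sq_integral (d b e : ℝ) (hd : 0 < d) :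
    ∫ u in (0:ℝ)..d, (b * Real.sin (π*u/(2*d)))^2 * (1 - u*e)
      = b^2 * (d/2 - e*(d^2/4 + d^2/π^2)) := by
  have hπ : (π:ℝ) ≠ 0 := Real.pi_ne_zero
  have hd' : d ≠ 0 := hd.ne'
  have key : ∀ u : ℝ, HasDerivAt (fun u : ℝ =>
      b^2 * ((u/2 - (d/(2*π)) * Real.sin (π*u/d))
        - e*(u^2/4 - (d/(2*π)) * (u * Real.sin (π*u/d)) - (d^2/(2*π^2)) * Real.cos (π*u/d))))
      ((b * Real.sin (π*u/(2*d)))^2 * (1 - u*e)) u := by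
    intro u
    have hlin : HasDerivAt (fun u : ℝ => π*u/d) (π/d) u := by
      simpa using ((hasDerivAt_id u).const_mul π).div_const d
    have hs : HasDerivAt (fun u : ℝ => Real.sin (π*u/d)) (Real.cos (π*u/d) * (π/d)) u :=
      (Real.hasDerivAt_sin _).comp u hlin
    have hc : HasDerivAt (fun u : ℝ => Real.cos (π*u/d)) (-Real.sin (π*u/d) * (π/d)) u :=
      (Real.hasDerivAt_cos _).comp u hlin
    have hus : HasDerivAt (fun u : ℝ => u * Real.sin (π*u/d))
        (Real.sin (π*u/d) + u * (Real.cos (π*u/d) * (π/d))) u := by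
      exact ((hasDerivAt_id' u).mul hs).congr_deriv (by ring)
    have h1 : HasDerivAt (fun u : ℝ => u/2) (1/2) u := by
      simpa using (hasDerivAt_id u).div_const 2
    have h2 : HasDerivAt (fun u : ℝ => u^2/4) (2*u/4) u := by
      simpa using (hasDerivAt_pow 2 u).div_const 4
    have H := ((h1.sub (hs.const_mul (d/(2*π)))).sub
      (((h2.sub (hus.const_mul (d/(2*π)))).sub (hc.const_mul (d^2/(2*π^2)))).const_mul e)).const_mul (b^2)
    refine H.congr_deriv ?_
    have hcd : Real.cos (π*u/d) = 1 - 2 * Real.sin (π*u/(2*d))^2 := by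
      rw [show π*u/d = 2*(π*u/(2*d)) by field_simp, Real.cos_two_mul,
        Real.cos_sq']
      ring
    rw [hcd]
    field_simp
    ring
  rw [intervalIntegral.integral_eq_sub_of_hasDerivAt (fun u _ => key u)
    (Continuous.intervalIntegrable (by fun_prop) _ _)]
  have e1 : π*d/d = π := by field_simp
  have e0 : π*(0:ℝ)/d = 0 := by simp
  simp only [e1, e0, Real.sin_pi, Real.cos_pi, Real.sin_zero, Real.cos_zero]
  field_simp
  ring

lemma inner1 (d p p' g : ℝ) (hd : 0 < d) (hpg : p' = 0 ∨ g = 0) :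
    (∫ u in (0:ℝ)..d, ((Real.sqrt (2/d) * p' * Real.sin (π*u/(2*d)))^2 / (1 - u*g)
      + (Real.sqrt (2/d) * p * (π/(2*d)) * Real.cos (π*u/(2*d)))^2 * (1 - u*g)))
    = p'^2 + (π^2/(4*d^2)) * p^2 + p^2 * g * (1/(2*d) - π^2/(8*d)) := by
  have hc2 : Real.sqrt (2/d) ^ 2 = 2/d := Real.sq_sqrt (by positivity)
  have hπ : (π:ℝ) ≠ 0 := Real.pi_ne_zero
  have hd' : d ≠ 0 := hd.ne'
  have heq : ∀ u : ℝ, (Real.sqrt (2/d) * p' * Real.sin (π*u/(2*d)))^2 / (1 - u*g)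
      + (Real.sqrt (2/d) * p * (π/(2*d)) * Real.cos (π*u/(2*d)))^2 * (1 - u*g)
      = (Real.sqrt (2/d) * p' * Real.sin (π*u/(2*d)))^2 * (1 - u*g)
        + (Real.sqrt (2/d) * p * (π/(2*d)) * Real.cos (π*u/(2*d)))^2 * (1 - u*g) := by
    intro u
    rcases hpg with h | h <;> simp [h]
  rw [intervalIntegral.integral_congr (fun u _ => heq u),
    intervalIntegral.integral_add
      (Continuous.intervalIntegrable (by fun_prop) _ _)
      (Continuous.intervalIntegrable (by fun_prop) _ _),
    sin_sq_integral d _ g hd, cos_sq_integral d _ g hd]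
  rw [mul_pow, mul_pow, mul_pow, hc2]
  rcases hpg with h | h <;> rw [h] <;> field_simp <;> ring

lemma inner2 (d p g : ℝ) (hd : 0 < d) :
    (∫ u in (0:ℝ)..d, (Real.sqrt (2/d) * p * Real.sin (π*u/(2*d)))^2 * (1 - u*g))
    = p^2 - p^2 * g * (d/2 + 2*d/π^2) := by
  have hc2 : Real.sqrt (2/d) ^ 2 = 2/d := Real.sq_sqrt (by positivity)
  have hπ : (π:ℝ) ≠ 0 := Real.pi_ne_zero
  have hd' : d ≠ 0 := hd.ne'
  rw [sin_sq_integral d _ g hd, mul_pow, hc2]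
  field_simp
  ring

theorem stmt17 (s₁ s₂ s₃ s₄ : ℝ) (h12 : s₁ < s₂) (h23 : s₂ < s₃) (h34 : s₃ < s₄)
    (γ : ℝ → ℝ) (hγc : Continuous γ) (hγsupp : HasCompactSupport γ)
    (hγ0 : ∀ s, s ∉ Ioo s₁ s₂ ∪ Ioo s₃ s₄ → γ s = 0)
    (hγneg : ∀ s ∈ Ioo s₁ s₂, γ s < 0) (hγpos : ∀ s ∈ Ioo s₃ s₄, 0 < γ s)
    (φ : ℝ → ℝ) (hφ : ContDiff ℝ 1 φ)
    (hφL2 : Integrable (fun s => (φ s) ^ 2))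
    (hφ'L2 : Integrable (fun s => (deriv φ s) ^ 2))
    (hφ1 : ∀ s ∈ Icc s₁ s₂, φ s = 1) (hφ0 : ∀ s ∈ Icc s₃ s₄, φ s = 0)
    (Q : ℝ → ℝ)
    (hQ : ∀ d : ℝ, 0 < d → (∀ s u, u ∈ Icc (0:ℝ) d → 0 < 1 - u * γ s) →
      Q d = (∫ s, ∫ u in (0:ℝ)..d,
          ((deriv (fun s' => Real.sqrt (2 / d) * φ s' * Real.sin (π * u / (2 * d))) s) ^ 2
              / (1 - u * γ s)
            + (deriv (fun u' => Real.sqrt (2 / d) * φ s * Real.sin (π * u' / (2 * d))) u) ^ 2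
              * (1 - u * γ s)))
        - (π ^ 2 / (4 * d ^ 2)) * ∫ s, ∫ u in (0:ℝ)..d,
            (Real.sqrt (2 / d) * φ s * Real.sin (π * u / (2 * d))) ^ 2 * (1 - u * γ s)) :
    (∀ d : ℝ, 0 < d → (∀ s u, u ∈ Icc (0:ℝ) d → 0 < 1 - u * γ s) →
      Q d = (∫ s, (deriv φ s) ^ 2) + (1 / d) * ∫ s in s₁..s₂, γ s) ∧
    ∃ d₀ > 0, ∀ d : ℝ, 0 < d → d < d₀ →
      (∀ s u, u ∈ Icc (0:ℝ) d → 0 < 1 - u * γ s) → Q d < 0 := by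
  have hφd : Differentiable ℝ φ := hφ.differentiable one_ne_zero
  have hπ : (π:ℝ) ≠ 0 := Real.pi_ne_zero
  -- key: deriv φ s = 0 or γ s = 0
  have hpg : ∀ s, deriv φ s = 0 ∨ γ s = 0 := by
    intro s
    by_cases hg : γ s = 0
    · exact Or.inr hg
    · left
      have hmem : s ∈ Ioo s₁ s₂ ∪ Ioo s₃ s₄ := by
        by_contra h; exact hg (hγ0 s h)
      rcases hmem with h | h
      · have hev : φ =ᶠ[nhds s] fun _ => (1:ℝ) :=
          Filter.eventuallyEq_of_mem (isOpen_Ioo.mem_nhds h)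
            (fun x hx => hφ1 x (Ioo_subset_Icc_self hx))
        rw [hev.deriv_eq, deriv_const]
      · have hev : φ =ᶠ[nhds s] fun _ => (0:ℝ) :=
          Filter.eventuallyEq_of_mem (isOpen_Ioo.mem_nhds h)
            (fun x hx => hφ0 x (Ioo_subset_Icc_self hx))
        rw [hev.deriv_eq, deriv_const]
  -- integrability of φ² γ
  have hint3 : Integrable (fun s => (φ s)^2 * γ s) := by
    have hcs : HasCompactSupport (fun s => (φ s)^2 * γ s) := hγsupp.mul_left
    exact (((hφ.continuous).pow 2).mul hγc).integrable_of_hasCompactSupport hcs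
  -- φ²γ equals indicator
  have hCφ : (∫ s, (φ s)^2 * γ s) = ∫ s in s₁..s₂, γ s := by
    have hInd : (fun s => (φ s)^2 * γ s) = (Icc s₁ s₂).indicator γ := by
      funext s
      by_cases h : s ∈ Icc s₁ s₂
      · rw [Set.indicator_of_mem h, hφ1 s h]; ring
      · rw [Set.indicator_of_notMem h]
        by_cases h2 : s ∈ Ioo s₃ s₄
        · rw [hφ0 s (Ioo_subset_Icc_self h2)]; ring
        · rw [hγ0 s (by
            rintro (h3 | h3)
            · exact h (Ioo_subset_Icc_self h3)
            · exact h2 h3)]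
          ring
    rw [hInd, MeasureTheory.integral_indicator measurableSet_Icc, integral_Icc_eq_integral_Ioc,
      ← intervalIntegral.integral_of_le h12.le]
  set A := ∫ s, (deriv φ s) ^ 2 with hA
  set C := ∫ s in s₁..s₂, γ s with hCdef
  have main : ∀ d : ℝ, 0 < d → (∀ s u, u ∈ Icc (0:ℝ) d → 0 < 1 - u * γ s) →
      Q d = A + (1 / d) * C := by
    intro d hd hpos
    have hd' : d ≠ 0 := hd.ne'
    have h1 : ∀ s u : ℝ, deriv (fun s' => Real.sqrt (2/d) * φ s' * Real.sin (π * u / (2*d))) s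
        = Real.sqrt (2/d) * deriv φ s * Real.sin (π*u/(2*d)) := by
      intro s u
      have he : (fun s' => Real.sqrt (2/d) * φ s' * Real.sin (π * u / (2*d)))
          = fun s' => (Real.sqrt (2/d) * Real.sin (π*u/(2*d))) * φ s' := by
        funext s'; ring
      rw [he, deriv_const_mul _ (hφd s)]; ring
    have h2 : ∀ s u : ℝ, deriv (fun u' => Real.sqrt (2/d) * φ s * Real.sin (π * u' / (2*d))) u
        = Real.sqrt (2/d) * φ s * (π/(2*d)) * Real.cos (π*u/(2*d)) := by
      intro s u
      have hlin : HasDerivAt (fun u' : ℝ => π * u' / (2*d)) (π/(2*d)) u := by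
        simpa using ((hasDerivAt_id u).const_mul π).div_const (2*d)
      have H : HasDerivAt (fun u' : ℝ => Real.sqrt (2/d) * φ s * Real.sin (π * u' / (2*d)))
          (Real.sqrt (2/d) * φ s * (Real.cos (π*u/(2*d)) * (π/(2*d)))) u :=
        ((Real.hasDerivAt_sin _).comp u hlin).const_mul (Real.sqrt (2/d) * φ s)
      rw [H.deriv]; ring
    have hIin : ∀ s : ℝ, (∫ u in (0:ℝ)..d,
        ((deriv (fun s' => Real.sqrt (2 / d) * φ s' * Real.sin (π * u / (2 * d))) s) ^ 2
            / (1 - u * γ s)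
          + (deriv (fun u' => Real.sqrt (2 / d) * φ s * Real.sin (π * u' / (2 * d))) u) ^ 2
            * (1 - u * γ s)))
        = (deriv φ s)^2 + (π^2/(4*d^2)) * (φ s)^2
          + (φ s)^2 * γ s * (1/(2*d) - π^2/(8*d)) := by
      intro s
      simp only [h1, h2]
      exact inner1 d (φ s) (deriv φ s) (γ s) hd (hpg s)
    have hIin2 : ∀ s : ℝ, (∫ u in (0:ℝ)..d,
        (Real.sqrt (2 / d) * φ s * Real.sin (π * u / (2 * d))) ^ 2 * (1 - u * γ s))
        = (φ s)^2 - (φ s)^2 * γ s * (d/2 + 2*d/π^2) := by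
      intro s
      exact inner2 d (φ s) (γ s) hd
    rw [hQ d hd hpos]
    simp only [hIin, hIin2]
    have i1 : Integrable (fun s => deriv φ s ^ 2 + π^2/(4*d^2) * (φ s)^2) :=
      hφ'L2.add (hφL2.const_mul _)
    have i2 : Integrable (fun s => (φ s)^2 * γ s * (1/(2*d) - π^2/(8*d))) := hint3.mul_const _
    have i3 : Integrable (fun s => (φ s)^2 * γ s * (d/2 + 2*d/π^2)) := hint3.mul_const _
    rw [integral_add i1 i2, integral_add hφ'L2 (hφL2.const_mul _),
      integral_sub hφL2 i3,
      MeasureTheory.integral_const_mul, MeasureTheory.integral_mul_const, MeasureTheory.integral_mul_const, hCφ, ← hA]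
    field_simp
    ring
  refine ⟨main, ?_⟩
  have hCneg : C < 0 := by
    have hpos : 0 < ∫ s in s₁..s₂, -γ s :=
      intervalIntegral_pos_of_pos_on (hγc.neg.intervalIntegrable _ _)
        (fun x hx => by linarith [hγneg x hx]) h12
    rw [intervalIntegral.integral_neg] at hpos
    rw [hCdef]; linarith
  have hAnn : 0 ≤ A := integral_nonneg fun s => sq_nonneg _
  refine ⟨-C/(A+1), div_pos (by linarith) (by linarith), fun d hd hdlt hyp => ?_⟩
  rw [main d hd hyp]
  have hdc : d * (A + 1) < -C := (lt_div_iff₀ (by linarith)).mp hdlt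
  have h1 : A * d + C < 0 := by nlinarith
  have h2 : A + (1/d) * C = (A * d + C)/d := by field_simp
  rw [h2]
  exact div_neg_of_neg_of_pos h1 hd
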